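/- Let f be an element of the free group F_G whose reduced word begins with the letter g_1 (with positive sign). Let σ be φ_i or φ_i^{-1} for some i ≥ 1, but not φ_1^{-1}. Then the reduced word of σ(f) also begins with g_1 (with positive sign). -/

import Mathlib

/-- The Artin automorphism `φ_i` (as an endomorphism of the free group on
`g_0, g_1, …`, given by its values on the generators): `g_i ↦ g_i g_{i+1} g_i⁻¹`,
`g_{i+1} ↦ g_i`, and `g_j ↦ g_j` for `j ≠ i, i+1`. -/
def artinHom (i : ℕ) : FreeGroup ℕ →* FreeGroup ℕ :=
  FreeGroup.lift fun j =>
    if j = i then FreeGroup.of i * FreeGroup.of (i + 1) * (FreeGroup.of i)⁻¹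
    else if j = i + 1 then FreeGroup.of i
    else FreeGroup.of j

/-- The inverse Artin automorphism `φ_i⁻¹`: `g_i ↦ g_{i+1}`,
`g_{i+1} ↦ g_{i+1}⁻¹ g_i g_{i+1}`, and `g_j ↦ g_j` for `j ≠ i, i+1`. -/
def artinInvHom (i : ℕ) : FreeGroup ℕ →* FreeGroup ℕ :=
  FreeGroup.lift fun j =>
    if j = i then FreeGroup.of (i + 1)
    else if j = i + 1 then (FreeGroup.of (i + 1))⁻¹ * FreeGroup.of i * FreeGroup.of (i + 1)
    else FreeGroup.of j

namespace ArtinProof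
open FreeGroup

abbrev Ltr := ℕ × Bool

def Reduced (L : List Ltr) : Prop := FreeGroup.reduce L = L

lemma step_nil (x : Ltr) {W : List Ltr} (h : reduce W = []) : reduce (x :: W) = [x] := by
  rw [reduce.cons, h]

lemma step_nc {x y : Ltr} {ys W : List Ltr} (h : reduce W = y :: ys)
    (hne : ¬ (x.1 = y.1 ∧ x.2 = !y.2)) : reduce (x :: W) = x :: y :: ys := by
  rw [reduce.cons, h]
  show (if x.1 = y.1 ∧ x.2 = !y.2 then ys else x :: y :: ys) = _
  rw [if_neg hne]

lemma step_cancel (x : Ltr) {ys W : List Ltr} (h : reduce W = (x.1, !x.2) :: ys) :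
    reduce (x :: W) = ys := by
  rw [reduce.cons, h]
  show (if x.1 = x.1 ∧ x.2 = !!x.2 then ys else _) = _
  rw [if_pos ⟨rfl, by simp⟩]

lemma reduced_tail {x : Ltr} {l : List Ltr} (h : Reduced (x :: l)) : Reduced l := by
  unfold Reduced at *
  have hle : (reduce l).length ≤ l.length := (reduce.red).length_le
  rcases hr : reduce l with _ | ⟨y, ys⟩
  · rw [reduce.cons, hr] at h
    have : ([x] : List Ltr) = x :: l := h
    simp at this
    exact this.symm
  · rw [hr] at hle
    rw [reduce.cons, hr] at h
    by_cases hc : x.1 = y.1 ∧ x.2 = !y.2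
    · have : ys = x :: l := by
        have h' : (if x.1 = y.1 ∧ x.2 = !y.2 then ys else x :: y :: ys) = x :: l := h
        rwa [if_pos hc] at h'
      rw [this] at hle
      simp at hle
    · have h' : (if x.1 = y.1 ∧ x.2 = !y.2 then ys else x :: y :: ys) = x :: l := h
      rw [if_neg hc] at h'
      simp at h'
      exact h'

lemma reduced_pair {x y : Ltr} {l : List Ltr} (h : Reduced (x :: y :: l)) :
    ¬ (x.1 = y.1 ∧ x.2 = !y.2) := by
  rintro ⟨h1, h2⟩
  have ht : reduce (y :: l) = y :: l := reduced_tail h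
  have hy : y = (x.1, !x.2) := by
    obtain ⟨y1, y2⟩ := y; simp at h1 h2 ⊢
    exact ⟨h1.symm, by simp [h2]⟩
  have hc : reduce (x :: y :: l) = l := step_cancel x (by rw [ht, hy])
  have heq : x :: y :: l = l := by
    have hh : reduce (x :: y :: l) = x :: y :: l := h
    rw [← hh, hc]
  have hl := congrArg List.length heq
  simp at hl
  omega

lemma append_reduce (A B : List Ltr) : reduce (A ++ B) = reduce (A ++ reduce B) :=
  reduce.eq_of_red (Red.append_append Relation.ReflTransGen.refl reduce.red)

def wmap (r : Ltr → List Ltr) : List Ltr → List Ltr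
  | [] => []
  | x :: L => r x ++ wmap r L

def rA (i : ℕ) (x : Ltr) : List Ltr :=
  if x.1 = i then [(i, true), (i+1, x.2), (i, false)]
  else if x.1 = i+1 then [(i, x.2)] else [x]

def rB (i : ℕ) (x : Ltr) : List Ltr :=
  if x.1 = i then [(i+1, x.2)]
  else if x.1 = i+1 then [(i+1, false), (i, x.2), (i+1, true)] else [x]

lemma mk_rA (i : ℕ) (x : Ltr) : FreeGroup.mk (rA i x) = artinHom i (FreeGroup.mk [x]) := by
  obtain ⟨j, b⟩ := x
  by_cases hj : j = i
  · subst hj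
    cases b <;>
      simp [artinHom, rA, lift_mk, FreeGroup.of, mul_mk, inv_mk, invRev]
  · by_cases hj' : j = i + 1
    · subst hj'
      cases b <;>
        simp [artinHom, rA, hj, lift_mk, FreeGroup.of, mul_mk, inv_mk, invRev]
    · cases b <;>
        simp [artinHom, rA, hj, hj', lift_mk, FreeGroup.of, mul_mk, inv_mk, invRev]

lemma mk_rB (i : ℕ) (x : Ltr) : FreeGroup.mk (rB i x) = artinInvHom i (FreeGroup.mk [x]) := by
  obtain ⟨j, b⟩ := x
  by_cases hj : j = i
  · subst hj
    cases b <;>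
      simp [artinInvHom, rB, lift_mk, FreeGroup.of, mul_mk, inv_mk, invRev]
  · by_cases hj' : j = i + 1
    · subst hj'
      cases b <;>
        simp [artinInvHom, rB, hj, lift_mk, FreeGroup.of, mul_mk, inv_mk, invRev, mul_assoc]
    · cases b <;>
        simp [artinInvHom, rB, hj, hj', lift_mk, FreeGroup.of, mul_mk, inv_mk, invRev]

lemma hom_wmap (σ : FreeGroup ℕ →* FreeGroup ℕ) (r : Ltr → List Ltr)
    (hr : ∀ x, FreeGroup.mk (r x) = σ (FreeGroup.mk [x])) :
    ∀ L : List Ltr, σ (FreeGroup.mk L) = FreeGroup.mk (wmap r L)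
  | [] => by
      have : FreeGroup.mk ([] : List Ltr) = 1 := by rw [← one_eq_mk]
      rw [this, _root_.map_one, wmap, ← one_eq_mk]
  | x :: L => by
      have h1 : FreeGroup.mk (x :: L) = FreeGroup.mk [x] * FreeGroup.mk L := by
        rw [mul_mk]; rfl
      rw [h1, _root_.map_mul, ← hr, hom_wmap σ r hr L, wmap, mul_mk]

lemma toWord_hom (σ : FreeGroup ℕ →* FreeGroup ℕ) (r : Ltr → List Ltr)
    (hr : ∀ x, FreeGroup.mk (r x) = σ (FreeGroup.mk [x])) (f : FreeGroup ℕ) :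
    (σ f).toWord = reduce (wmap r f.toWord) := by
  conv_lhs => rw [← mk_toWord (x := f)]
  rw [hom_wmap σ r hr, toWord_mk]
lemma step_cancel' {x y : Ltr} {ys W : List Ltr} (h : reduce W = y :: ys)
    (h1 : x.1 = y.1) (h2 : x.2 = !y.2) : reduce (x :: W) = ys := by
  have hy : y = (x.1, !x.2) := by
    obtain ⟨y1, y2⟩ := y; simp at h1 h2 ⊢
    exact ⟨h1.symm, by simp [h2]⟩
  exact step_cancel x (by rw [h, hy])

def InvA (i : ℕ) : Option Ltr → List Ltr → Prop
  | none, R => R = []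
  | some (k, c), R =>
    if k = i then ∃ M, R = (i, true) :: (i + 1, c) :: M
    else if k = i + 1 then
      if c = true then
        ∃ M, R = (i, true) :: M ∧ M.head? ≠ some (i, false) ∧
          M.head? ≠ some (i + 1, true) ∧ M.head? ≠ some (i + 1, false)
      else
        ∃ x M, R = x :: M ∧ (x = (i, false) ∨ x = (i + 1, true) ∨ x = (i + 1, false))
    else ∃ M, R = (k, c) :: M

lemma InvA_none (i : ℕ) (R : List Ltr) : InvA i none R ↔ R = [] := Iff.rfl

lemma InvA_s (i : ℕ) (c : Bool) (R : List Ltr) :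
    InvA i (some (i, c)) R ↔ ∃ M, R = (i, true) :: (i + 1, c) :: M := by
  show (if i = i then _ else _) ↔ _
  rw [if_pos rfl]

lemma InvA_t (i : ℕ) (R : List Ltr) :
    InvA i (some (i + 1, true)) R ↔ ∃ M, R = (i, true) :: M ∧ M.head? ≠ some (i, false) ∧
      M.head? ≠ some (i + 1, true) ∧ M.head? ≠ some (i + 1, false) := by
  show (if i + 1 = i then _ else if i + 1 = i + 1 then if true = true then _ else _ else _) ↔ _
  rw [if_neg (by omega), if_pos rfl, if_pos rfl]

lemma InvA_tb (i : ℕ) (R : List Ltr) :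
    InvA i (some (i + 1, false)) R ↔ ∃ x M, R = x :: M ∧
      (x = (i, false) ∨ x = (i + 1, true) ∨ x = (i + 1, false)) := by
  show (if i + 1 = i then _ else if i + 1 = i + 1 then if false = true then _ else _ else _) ↔ _
  rw [if_neg (by omega), if_pos rfl, if_neg (by simp)]

lemma InvA_C (i k : ℕ) (c : Bool) (h1 : ¬ k = i) (h2 : ¬ k = i + 1) (R : List Ltr) :
    InvA i (some (k, c)) R ↔ ∃ M, R = (k, c) :: M := by
  show (if k = i then _ else if k = i + 1 then _ else _) ↔ _
  rw [if_neg h1, if_neg h2]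

lemma mainA (i : ℕ) : ∀ L : List Ltr, Reduced L → InvA i L.head? (reduce (wmap (rA i) L)) := by
  intro L
  induction L with
  | nil => intro _; simp [wmap, InvA]
  | cons a L ih =>
    intro hred
    have IH := ih (reduced_tail hred)
    obtain ⟨R', hR'def⟩ : ∃ R', reduce (wmap (rA i) L) = R' := ⟨_, rfl⟩
    have hR'r : reduce R' = R' := by rw [← hR'def]; exact reduce.idem
    rw [hR'def] at IH
    have hsplit : reduce (wmap (rA i) (a :: L)) = reduce (rA i a ++ R') := by
      rw [show wmap (rA i) (a :: L) = rA i a ++ wmap (rA i) L from rfl, append_reduce, hR'def]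
    rw [List.head?_cons, hsplit]
    obtain ⟨j, b⟩ := a
    by_cases hj : j = i
    · -- a = (i, b), image [(i,true),(i+1,b),(i,false)]
      obtain rfl := hj.symm
      rw [show rA i (i, b) = [(i, true), (i+1, b), (i, false)] from by simp [rA]]
      rw [InvA_s]
      rcases L with _ | ⟨⟨k, c⟩, L'⟩
      · rw [List.head?_nil, InvA_none] at IH
        rw [IH]
        have h3 : reduce ([((i:ℕ), false)]) = [((i:ℕ), false)] := rfl
        have h2 := step_nc (x := ((i:ℕ)+1, b)) h3 (by simp)
        have h1 := step_nc (x := ((i:ℕ), true)) h2 (by simp)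
        exact ⟨[(i, false)], by simpa using h1⟩
      · rw [List.head?_cons] at IH
        by_cases hk : k = i
        · obtain rfl := hk.symm
          have hcb : c = b := by
            have h := reduced_pair hred
            simp at h
            cases b <;> cases c <;> simp_all
          obtain rfl := hcb.symm
          rw [InvA_s] at IH
          obtain ⟨M, hM⟩ := IH
          have h3 : reduce (((i:ℕ), false) :: R') = ((i:ℕ)+1, b) :: M :=
            step_cancel' (y := ((i:ℕ), true)) (by rw [hR'r, hM]) rfl rfl
          have h2 := step_nc (x := ((i:ℕ)+1, b)) h3 (by simp)
          have h1 := step_nc (x := ((i:ℕ), true)) h2 (by simp)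
          exact ⟨((i:ℕ)+1, b) :: M, by simpa using h1⟩
        · by_cases hk' : k = i + 1
          · obtain rfl := hk'.symm
            cases c
            · rw [InvA_tb] at IH
              obtain ⟨x, M, hM, hx⟩ := IH
              have h3 : reduce (((i:ℕ), false) :: R') = ((i:ℕ), false) :: x :: M :=
                step_nc (by rw [hR'r, hM]) (by rcases hx with rfl | rfl | rfl <;> simp)
              have h2 := step_nc (x := ((i:ℕ)+1, b)) h3 (by simp)
              have h1 := step_nc (x := ((i:ℕ), true)) h2 (by simp)
              exact ⟨((i:ℕ), false) :: x :: M, by simpa using h1⟩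
            · rw [InvA_t] at IH
              obtain ⟨M, hM, hM1, hM2, hM3⟩ := IH
              have h3 : reduce (((i:ℕ), false) :: R') = M :=
                step_cancel' (y := ((i:ℕ), true)) (by rw [hR'r, hM]) rfl rfl
              rcases M with _ | ⟨y, M'⟩
              · have h2 := step_nil ((i:ℕ)+1, b) h3
                have h1 := step_nc (x := ((i:ℕ), true)) h2 (by simp)
                exact ⟨[], by simpa using h1⟩
              · have hy : ¬(((i:ℕ)+1, b).1 = y.1 ∧ ((i:ℕ)+1, b).2 = !y.2) := by
                  rintro ⟨e1, e2⟩
                  obtain ⟨y1, y2⟩ := y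
                  simp at e1 e2
                  subst e1
                  cases y2
                  · exact hM3 (by simp)
                  · exact hM2 (by simp)
                have h2 := step_nc (x := ((i:ℕ)+1, b)) h3 hy
                have h1 := step_nc (x := ((i:ℕ), true)) h2 (by simp)
                exact ⟨y :: M', by simpa using h1⟩
          · rw [InvA_C i k c hk hk'] at IH
            obtain ⟨M, hM⟩ := IH
            have h3 : reduce (((i:ℕ), false) :: R') = ((i:ℕ), false) :: (k, c) :: M :=
              step_nc (by rw [hR'r, hM]) (by simp [Ne.symm hk])
            have h2 := step_nc (x := ((i:ℕ)+1, b)) h3 (by simp)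
            have h1 := step_nc (x := ((i:ℕ), true)) h2 (by simp)
            exact ⟨((i:ℕ), false) :: (k, c) :: M, by simpa using h1⟩
    · by_cases hj' : j = i + 1
      · -- a = (i+1, b), image [(i,b)]
        obtain rfl := hj'.symm
        rw [show rA i (i+1, b) = [(i, b)] from by simp [rA]]
        cases b
        · -- a = (i+1, false)
          rw [InvA_tb]
          rcases L with _ | ⟨⟨k, c⟩, L'⟩
          · rw [List.head?_nil, InvA_none] at IH
            rw [IH]
            exact ⟨(i, false), [], by simp [reduce], Or.inl rfl⟩
          · rw [List.head?_cons] at IH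
            by_cases hk : k = i
            · obtain rfl := hk.symm
              rw [InvA_s] at IH
              obtain ⟨M, hM⟩ := IH
              have h1 : reduce (((i:ℕ), false) :: R') = ((i:ℕ)+1, c) :: M :=
                step_cancel' (y := ((i:ℕ), true)) (by rw [hR'r, hM]) rfl rfl
              refine ⟨((i:ℕ)+1, c), M, by simpa using h1, ?_⟩
              cases c
              · exact Or.inr (Or.inr rfl)
              · exact Or.inr (Or.inl rfl)
            · by_cases hk' : k = i + 1
              · obtain rfl := hk'.symm
                have hcf : c = false := by
                  have h := reduced_pair hred
                  simp at h
                  cases c <;> simp_all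
                obtain rfl := hcf.symm
                rw [InvA_tb] at IH
                obtain ⟨x, M, hM, hx⟩ := IH
                have h1 : reduce (((i:ℕ), false) :: R') = ((i:ℕ), false) :: x :: M :=
                  step_nc (by rw [hR'r, hM]) (by rcases hx with rfl | rfl | rfl <;> simp)
                exact ⟨((i:ℕ), false), x :: M, by simpa using h1, Or.inl rfl⟩
              · rw [InvA_C i k c hk hk'] at IH
                obtain ⟨M, hM⟩ := IH
                have h1 : reduce (((i:ℕ), false) :: R') = ((i:ℕ), false) :: (k, c) :: M :=
                  step_nc (by rw [hR'r, hM]) (by simp [Ne.symm hk])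
                exact ⟨((i:ℕ), false), (k, c) :: M, by simpa using h1, Or.inl rfl⟩
        · -- a = (i+1, true)
          rw [InvA_t]
          rcases L with _ | ⟨⟨k, c⟩, L'⟩
          · rw [List.head?_nil, InvA_none] at IH
            rw [IH]
            exact ⟨[], by simp [reduce], by simp, by simp, by simp⟩
          · rw [List.head?_cons] at IH
            by_cases hk : k = i
            · obtain rfl := hk.symm
              rw [InvA_s] at IH
              obtain ⟨M, hM⟩ := IH
              have h1 : reduce (((i:ℕ), true) :: R') = ((i:ℕ), true) :: ((i:ℕ), true) :: ((i:ℕ)+1, c) :: M :=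
                step_nc (by rw [hR'r, hM]) (by simp)
              exact ⟨((i:ℕ), true) :: ((i:ℕ)+1, c) :: M, by simpa using h1,
                by simp, by simp, by simp⟩
            · by_cases hk' : k = i + 1
              · obtain rfl := hk'.symm
                have hct : c = true := by
                  have h := reduced_pair hred
                  simp at h
                  cases c <;> simp_all
                obtain rfl := hct.symm
                rw [InvA_t] at IH
                obtain ⟨M, hM, hM1, hM2, hM3⟩ := IH
                have h1 : reduce (((i:ℕ), true) :: R') = ((i:ℕ), true) :: ((i:ℕ), true) :: M :=
                  step_nc (by rw [hR'r, hM]) (by simp)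
                exact ⟨((i:ℕ), true) :: M, by simpa using h1, by simp, by simp, by simp⟩
              · rw [InvA_C i k c hk hk'] at IH
                obtain ⟨M, hM⟩ := IH
                have h1 : reduce (((i:ℕ), true) :: R') = ((i:ℕ), true) :: (k, c) :: M :=
                  step_nc (by rw [hR'r, hM]) (by simp [Ne.symm hk])
                exact ⟨(k, c) :: M, by simpa using h1, by simp [hk], by simp [hk'], by simp [hk']⟩
      · -- a = (j, b) with j ∉ {i, i+1}, image [(j,b)]
        rw [show rA i (j, b) = [(j, b)] from by simp [rA, hj, hj']]
        rw [InvA_C i j b hj hj']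
        rcases L with _ | ⟨⟨k, c⟩, L'⟩
        · rw [List.head?_nil, InvA_none] at IH
          rw [IH]
          exact ⟨[], by simp [reduce]⟩
        · rw [List.head?_cons] at IH
          by_cases hk : k = i
          · obtain rfl := hk.symm
            rw [InvA_s] at IH
            obtain ⟨M, hM⟩ := IH
            have h1 := step_nc (x := (j, b)) (by rw [hR'r, hM] : reduce R' = ((i:ℕ), true) :: ((i:ℕ)+1, c) :: M) (by simp [hj])
            exact ⟨((i:ℕ), true) :: ((i:ℕ)+1, c) :: M, by simpa using h1⟩
          · by_cases hk' : k = i + 1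
            · obtain rfl := hk'.symm
              cases c
              · rw [InvA_tb] at IH
                obtain ⟨x, M, hM, hx⟩ := IH
                have h1 := step_nc (x := (j, b)) (by rw [hR'r, hM] : reduce R' = x :: M)
                  (by rcases hx with rfl | rfl | rfl <;> simp [hj, hj'])
                exact ⟨x :: M, by simpa using h1⟩
              · rw [InvA_t] at IH
                obtain ⟨M, hM, hM1, hM2, hM3⟩ := IH
                have h1 := step_nc (x := (j, b)) (by rw [hR'r, hM] : reduce R' = ((i:ℕ), true) :: M) (by simp [hj])
                exact ⟨((i:ℕ), true) :: M, by simpa using h1⟩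
            · rw [InvA_C i k c hk hk'] at IH
              obtain ⟨M, hM⟩ := IH
              have h1 := step_nc (x := (j, b)) (by rw [hR'r, hM] : reduce R' = (k, c) :: M)
                (reduced_pair hred)
              exact ⟨(k, c) :: M, by simpa using h1⟩

def InvB (i : ℕ) : Option Ltr → List Ltr → Prop
  | none, R => R = []
  | some (k, c), R =>
    if k = i then
      if c = true then
        ∃ x M, R = x :: M ∧ (x = (i + 1, true) ∨ x = (i, true) ∨ x = (i, false))
      else
        ∃ M, R = (i + 1, false) :: M ∧ M.head? ≠ some (i, true) ∧ M.head? ≠ some (i, false)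
    else if k = i + 1 then ∃ M, R = (i + 1, false) :: (i, c) :: M
    else ∃ M, R = (k, c) :: M

lemma InvB_none (i : ℕ) (R : List Ltr) : InvB i none R ↔ R = [] := Iff.rfl

lemma InvB_st (i : ℕ) (R : List Ltr) :
    InvB i (some (i, true)) R ↔
      ∃ x M, R = x :: M ∧ (x = (i + 1, true) ∨ x = (i, true) ∨ x = (i, false)) := by
  show (if i = i then if true = true then _ else _ else _) ↔ _
  rw [if_pos rfl, if_pos rfl]

lemma InvB_sf (i : ℕ) (R : List Ltr) :
    InvB i (some (i, false)) R ↔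
      ∃ M, R = (i + 1, false) :: M ∧ M.head? ≠ some (i, true) ∧ M.head? ≠ some (i, false) := by
  show (if i = i then if false = true then _ else _ else _) ↔ _
  rw [if_pos rfl, if_neg (by simp)]

lemma InvB_t (i : ℕ) (c : Bool) (R : List Ltr) :
    InvB i (some (i + 1, c)) R ↔ ∃ M, R = (i + 1, false) :: (i, c) :: M := by
  show (if i + 1 = i then _ else if i + 1 = i + 1 then _ else _) ↔ _
  rw [if_neg (by omega), if_pos rfl]

lemma InvB_C (i k : ℕ) (c : Bool) (h1 : ¬ k = i) (h2 : ¬ k = i + 1) (R : List Ltr) :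
    InvB i (some (k, c)) R ↔ ∃ M, R = (k, c) :: M := by
  show (if k = i then _ else if k = i + 1 then _ else _) ↔ _
  rw [if_neg h1, if_neg h2]

lemma mainB (i : ℕ) : ∀ L : List Ltr, Reduced L → InvB i L.head? (reduce (wmap (rB i) L)) := by
  intro L
  induction L with
  | nil => intro _; simp [wmap, InvB]
  | cons a L ih =>
    intro hred
    have IH := ih (reduced_tail hred)
    obtain ⟨R', hR'def⟩ : ∃ R', reduce (wmap (rB i) L) = R' := ⟨_, rfl⟩
    have hR'r : reduce R' = R' := by rw [← hR'def]; exact reduce.idem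
    rw [hR'def] at IH
    have hsplit : reduce (wmap (rB i) (a :: L)) = reduce (rB i a ++ R') := by
      rw [show wmap (rB i) (a :: L) = rB i a ++ wmap (rB i) L from rfl, append_reduce, hR'def]
    rw [List.head?_cons, hsplit]
    obtain ⟨j, b⟩ := a
    by_cases hj : j = i
    · -- a = (i, b), image [(i+1, b)]
      obtain rfl := hj.symm
      rw [show rB i (i, b) = [(i+1, b)] from by simp [rB]]
      cases b
      · -- a = (i, false)
        rw [InvB_sf]
        rcases L with _ | ⟨⟨k, c⟩, L'⟩
        · rw [List.head?_nil, InvB_none] at IH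
          rw [IH]
          exact ⟨[], by simp [reduce], by simp, by simp⟩
        · rw [List.head?_cons] at IH
          by_cases hk : k = i
          · obtain rfl := hk.symm
            have hcb : c = false := by
              have h := reduced_pair hred
              simp at h
              cases c <;> simp_all
            obtain rfl := hcb.symm
            rw [InvB_sf] at IH
            obtain ⟨M, hM, hM1, hM2⟩ := IH
            have h1 := step_nc (x := ((i:ℕ)+1, false))
              (by rw [hR'r, hM] : reduce R' = ((i:ℕ)+1, false) :: M) (by simp)
            exact ⟨((i:ℕ)+1, false) :: M, by simpa using h1, by simp, by simp⟩
          · by_cases hk' : k = i + 1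
            · obtain rfl := hk'.symm
              rw [InvB_t] at IH
              obtain ⟨M, hM⟩ := IH
              have h1 := step_nc (x := ((i:ℕ)+1, false))
                (by rw [hR'r, hM] : reduce R' = ((i:ℕ)+1, false) :: ((i:ℕ), c) :: M) (by simp)
              exact ⟨((i:ℕ)+1, false) :: ((i:ℕ), c) :: M, by simpa using h1, by simp, by simp⟩
            · rw [InvB_C i k c hk hk'] at IH
              obtain ⟨M, hM⟩ := IH
              have h1 := step_nc (x := ((i:ℕ)+1, false))
                (by rw [hR'r, hM] : reduce R' = (k, c) :: M) (by simp [Ne.symm hk'])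
              exact ⟨(k, c) :: M, by simpa using h1, by simp [hk], by simp [hk]⟩
      · -- a = (i, true)
        rw [InvB_st]
        rcases L with _ | ⟨⟨k, c⟩, L'⟩
        · rw [List.head?_nil, InvB_none] at IH
          rw [IH]
          exact ⟨((i:ℕ)+1, true), [], by simp [reduce], Or.inl rfl⟩
        · rw [List.head?_cons] at IH
          by_cases hk : k = i
          · obtain rfl := hk.symm
            have hcb : c = true := by
              have h := reduced_pair hred
              simp at h
              cases c <;> simp_all
            obtain rfl := hcb.symm
            rw [InvB_st] at IH
            obtain ⟨x, M, hM, hx⟩ := IH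
            have h1 := step_nc (x := ((i:ℕ)+1, true))
              (by rw [hR'r, hM] : reduce R' = x :: M)
              (by rcases hx with rfl | rfl | rfl <;> simp)
            exact ⟨((i:ℕ)+1, true), x :: M, by simpa using h1, Or.inl rfl⟩
          · by_cases hk' : k = i + 1
            · obtain rfl := hk'.symm
              rw [InvB_t] at IH
              obtain ⟨M, hM⟩ := IH
              have h1 : reduce (((i:ℕ)+1, true) :: R') = ((i:ℕ), c) :: M :=
                step_cancel' (y := ((i:ℕ)+1, false)) (by rw [hR'r, hM]) rfl rfl
              refine ⟨((i:ℕ), c), M, by simpa using h1, ?_⟩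
              cases c
              · exact Or.inr (Or.inr rfl)
              · exact Or.inr (Or.inl rfl)
            · rw [InvB_C i k c hk hk'] at IH
              obtain ⟨M, hM⟩ := IH
              have h1 := step_nc (x := ((i:ℕ)+1, true))
                (by rw [hR'r, hM] : reduce R' = (k, c) :: M) (by simp [Ne.symm hk'])
              exact ⟨((i:ℕ)+1, true), (k, c) :: M, by simpa using h1, Or.inl rfl⟩
    · by_cases hj' : j = i + 1
      · -- a = (i+1, b), image [(i+1,false), (i,b), (i+1,true)]
        obtain rfl := hj'.symm
        rw [show rB i (i+1, b) = [(i+1, false), (i, b), (i+1, true)] from by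
          simp [rB, show ¬ (i+1 = i) from by omega]]
        rw [InvB_t]
        rcases L with _ | ⟨⟨k, c⟩, L'⟩
        · rw [List.head?_nil, InvB_none] at IH
          rw [IH]
          have h3 : reduce ([((i:ℕ)+1, true)]) = [((i:ℕ)+1, true)] := rfl
          have h2 := step_nc (x := ((i:ℕ), b)) h3 (by simp)
          have h1 := step_nc (x := ((i:ℕ)+1, false)) h2 (by simp)
          exact ⟨[((i:ℕ)+1, true)], by simpa using h1⟩
        · rw [List.head?_cons] at IH
          by_cases hk : k = i
          · obtain rfl := hk.symm
            cases c
            · rw [InvB_sf] at IH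
              obtain ⟨M, hM, hM1, hM2⟩ := IH
              have h3 : reduce (((i:ℕ)+1, true) :: R') = M :=
                step_cancel' (y := ((i:ℕ)+1, false)) (by rw [hR'r, hM]) rfl rfl
              rcases M with _ | ⟨y, M'⟩
              · have h2 := step_nil ((i:ℕ), b) h3
                have h1 := step_nc (x := ((i:ℕ)+1, false)) h2 (by simp)
                exact ⟨[], by simpa using h1⟩
              · have hy : ¬(((i:ℕ), b).1 = y.1 ∧ ((i:ℕ), b).2 = !y.2) := by
                  rintro ⟨e1, e2⟩
                  obtain ⟨y1, y2⟩ := y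
                  simp at e1 e2
                  subst e1
                  cases y2
                  · exact hM2 (by simp)
                  · exact hM1 (by simp)
                have h2 := step_nc (x := ((i:ℕ), b)) h3 hy
                have h1 := step_nc (x := ((i:ℕ)+1, false)) h2 (by simp)
                exact ⟨y :: M', by simpa using h1⟩
            · rw [InvB_st] at IH
              obtain ⟨x, M, hM, hx⟩ := IH
              have h3 := step_nc (x := ((i:ℕ)+1, true))
                (by rw [hR'r, hM] : reduce R' = x :: M)
                (by rcases hx with rfl | rfl | rfl <;> simp)
              have h2 := step_nc (x := ((i:ℕ), b)) h3 (by simp)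
              have h1 := step_nc (x := ((i:ℕ)+1, false)) h2 (by simp)
              exact ⟨((i:ℕ)+1, true) :: x :: M, by simpa using h1⟩
          · by_cases hk' : k = i + 1
            · obtain rfl := hk'.symm
              have hcb : c = b := by
                have h := reduced_pair hred
                simp at h
                cases b <;> cases c <;> simp_all
              obtain rfl := hcb.symm
              rw [InvB_t] at IH
              obtain ⟨M, hM⟩ := IH
              have h3 : reduce (((i:ℕ)+1, true) :: R') = ((i:ℕ), b) :: M :=
                step_cancel' (y := ((i:ℕ)+1, false)) (by rw [hR'r, hM]) rfl rfl
              have h2 := step_nc (x := ((i:ℕ), b)) h3 (by simp)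
              have h1 := step_nc (x := ((i:ℕ)+1, false)) h2 (by simp)
              exact ⟨((i:ℕ), b) :: M, by simpa using h1⟩
            · rw [InvB_C i k c hk hk'] at IH
              obtain ⟨M, hM⟩ := IH
              have h3 := step_nc (x := ((i:ℕ)+1, true))
                (by rw [hR'r, hM] : reduce R' = (k, c) :: M) (by simp [Ne.symm hk'])
              have h2 := step_nc (x := ((i:ℕ), b)) h3 (by simp)
              have h1 := step_nc (x := ((i:ℕ)+1, false)) h2 (by simp)
              exact ⟨((i:ℕ)+1, true) :: (k, c) :: M, by simpa using h1⟩
      · -- a = (j, b), j ∉ {i, i+1}, image [(j,b)]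
        rw [show rB i (j, b) = [(j, b)] from by simp [rB, hj, hj']]
        rw [InvB_C i j b hj hj']
        rcases L with _ | ⟨⟨k, c⟩, L'⟩
        · rw [List.head?_nil, InvB_none] at IH
          rw [IH]
          exact ⟨[], by simp [reduce]⟩
        · rw [List.head?_cons] at IH
          by_cases hk : k = i
          · obtain rfl := hk.symm
            cases c
            · rw [InvB_sf] at IH
              obtain ⟨M, hM, hM1, hM2⟩ := IH
              have h1 := step_nc (x := (j, b))
                (by rw [hR'r, hM] : reduce R' = ((i:ℕ)+1, false) :: M) (by simp [hj'])
              exact ⟨((i:ℕ)+1, false) :: M, by simpa using h1⟩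
            · rw [InvB_st] at IH
              obtain ⟨x, M, hM, hx⟩ := IH
              have h1 := step_nc (x := (j, b))
                (by rw [hR'r, hM] : reduce R' = x :: M)
                (by rcases hx with rfl | rfl | rfl <;> simp [hj, hj'])
              exact ⟨x :: M, by simpa using h1⟩
          · by_cases hk' : k = i + 1
            · obtain rfl := hk'.symm
              rw [InvB_t] at IH
              obtain ⟨M, hM⟩ := IH
              have h1 := step_nc (x := (j, b))
                (by rw [hR'r, hM] : reduce R' = ((i:ℕ)+1, false) :: ((i:ℕ), c) :: M)
                (by simp [hj'])
              exact ⟨((i:ℕ)+1, false) :: ((i:ℕ), c) :: M, by simpa using h1⟩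
            · rw [InvB_C i k c hk hk'] at IH
              obtain ⟨M, hM⟩ := IH
              have h1 := step_nc (x := (j, b))
                (by rw [hR'r, hM] : reduce R' = (k, c) :: M) (reduced_pair hred)
              exact ⟨(k, c) :: M, by simpa using h1⟩

end ArtinProof

/-- If the reduced word of `f` begins with the letter `g_1` (positively), and `σ` is
`φ_i` or `φ_i⁻¹` for some `i ≥ 1` but not `φ_1⁻¹`, then the reduced word of `σ(f)`
also begins with `g_1` (positively). -/
theorem artin_preserves_leading_g1
    (f : FreeGroup ℕ) (hf : f.toWord.head? = some (1, true))
    (i : ℕ) (hi : 1 ≤ i) (σ : FreeGroup ℕ →* FreeGroup ℕ)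
    (hσ : σ = artinHom i ∨ σ = artinInvHom i)
    (hσ1 : σ ≠ artinInvHom 1) :
    (σ f).toWord.head? = some (1, true) := by
  have hredf : FreeGroup.reduce f.toWord = f.toWord := FreeGroup.reduce_toWord f
  rcases hσ with rfl | rfl
  · have h := ArtinProof.mainA i f.toWord hredf
    rw [hf] at h
    have hw : (artinHom i f).toWord =
        FreeGroup.reduce (ArtinProof.wmap (ArtinProof.rA i) f.toWord) :=
      ArtinProof.toWord_hom _ _ (ArtinProof.mk_rA i) f
    rw [hw]
    by_cases h1 : (1 : ℕ) = i
    · obtain rfl := h1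
      rw [ArtinProof.InvA_s] at h
      obtain ⟨M, hM⟩ := h
      rw [hM, List.head?_cons]
    · have h2 : ¬ (1 : ℕ) = i + 1 := by omega
      rw [ArtinProof.InvA_C i 1 true h1 h2] at h
      obtain ⟨M, hM⟩ := h
      rw [hM, List.head?_cons]
  · have hne : i ≠ 1 := by
      intro e
      exact hσ1 (by rw [e])
    have h := ArtinProof.mainB i f.toWord hredf
    rw [hf] at h
    have hw : (artinInvHom i f).toWord =
        FreeGroup.reduce (ArtinProof.wmap (ArtinProof.rB i) f.toWord) :=
      ArtinProof.toWord_hom _ _ (ArtinProof.mk_rB i) f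
    rw [hw]
    have h1 : ¬ (1 : ℕ) = i := by omega
    have h2 : ¬ (1 : ℕ) = i + 1 := by omega
    rw [ArtinProof.InvB_C i 1 true h1 h2] at h
    obtain ⟨M, hM⟩ := h
    rw [hM, List.head?_cons]
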